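/- arXiv:2310.17850 — 4 statements merged into one kernel-verified Lean document; each statement's English description precedes it below -/
import Mathlib

section
/- Let γ=((a,b),(c,d)) ∈ SL₂(ℤ) with c≠0, let x=(x₁,x₂) ∈ ℚ², and let ω=(ω₁,ω₂) ∈ ℝ² have entries linearly independent over ℚ. Suppose there exists α ∈ ℝ such that γᵀω = α·ω (i.e. aω₁+cω₂ = αω₁ and bω₁+dω₂ = αω₂) and α⁻¹v − v ∈ Λ, where v := x₁ω₁+x₂ω₂ and Λ := ℤω₁ ⊕ ℤω₂. Then 𝔷₀(γ)(x,ω) = ((a+d)/(2c))·B̄₂(x₂) + sgn(c)·S(−a,c;x) − (sgn(cα)/4)·1_ℤ(x₁)·1_ℤ(x₂); in particular 𝔷₀(γ)(x,ω) is a rational number. -/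
open scoped Pointwise Classical
open MeasureTheory

/-- Periodic Bernoulli function `B̄₁`. -/
noncomputable def B1 (y : ℝ) : ℝ := if ∃ n : ℤ, (n : ℝ) = y then 0 else Int.fract y - 1 / 2

/-- Periodic Bernoulli function `B̄₂`. -/
noncomputable def B2 (y : ℝ) : ℝ := Int.fract y ^ 2 - Int.fract y + 1 / 6

/-- Dedekind–Rademacher sum `S(a,c;x)`. -/
noncomputable def DR (a c : ℤ) (x₁ x₂ : ℝ) : ℝ :=
  ∑ m ∈ Finset.range c.natAbs, B1 (x₁ + (x₂ + m) * a / c) * B1 ((x₂ + m) / c)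

/-- Indicator function of `ℤ ⊆ ℚ`. -/
def indZ (q : ℚ) : ℝ := if q.den = 1 then 1 else 0

/-- The cocycle `𝔷₀(γ)(x, ω)` for `γ` with entries `a, b, c, d` and `c ≠ 0`;
only `a` and `c` enter the formula. -/
noncomputable def Z0 (a c : ℤ) (x₁ x₂ : ℚ) (ω₁ ω₂ : ℝ) : ℝ :=
  (Int.gcd a c : ℝ) ^ 2 / (2 * c * ((a : ℝ) + c * (ω₂ / ω₁))) *
      B2 (((c : ℝ) / (Int.gcd a c : ℝ)) * (x₁ : ℝ) - ((a : ℝ) / (Int.gcd a c : ℝ)) * (x₂ : ℝ))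
    + ((a : ℝ) + c * (ω₂ / ω₁)) / (2 * c) * B2 (x₂ : ℝ)
    + Real.sign (c : ℝ) * DR (-a) c (x₁ : ℝ) (x₂ : ℝ)
    - Real.sign ((c : ℝ) * ((a : ℝ) + c * (ω₂ / ω₁))) / 4 * indZ x₁ * indZ x₂

/-- The closed triangle `T_γ` in `ℝ²` with vertices `(0,0)`, `(a−1,c)`, `(−1,0)`. -/
def Tri (a c : ℤ) : Set (ℝ × ℝ) :=
  convexHull ℝ {((0 : ℝ), (0 : ℝ)), (((a : ℝ) - 1), (c : ℝ)), ((-1 : ℝ), (0 : ℝ))}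

/-- Number of integral points in a subset of `ℝ²`. -/
noncomputable def latticeCount (S : Set (ℝ × ℝ)) : ℕ :=
  Set.ncard {p : ℤ × ℤ | ((p.1 : ℝ), (p.2 : ℝ)) ∈ S}

/-- The `0`th Ehrhart coefficient `G₀(ℓ⁻¹ T_σ, m)` of the dilated triangle `ℓ⁻¹ T_σ`,
obtained by subtracting the second and first Ehrhart coefficient terms from the
lattice point count of `(m/ℓ)·T_σ`. -/
noncomputable def G0 (aσ cσ : ℤ) (ℓσ ℓ : ℕ) (m : ℕ) : ℝ :=
  (latticeCount (((m : ℝ) / (ℓ : ℝ)) • Tri aσ cσ) : ℝ)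
    - (cσ : ℝ) / (2 * (ℓ : ℝ) ^ 2) * (m : ℝ) ^ 2
    - ((ℓσ : ℝ) + 2) / (2 * (ℓ : ℝ)) * (m : ℝ)


lemma B2_add_int (t : ℝ) (n : ℤ) : B2 (t + n) = B2 t := by
  simp [B2, Int.fract_add_intCast]

lemma B2_neg (t : ℝ) : B2 (-t) = B2 t := by
  unfold B2
  rcases eq_or_ne (Int.fract t) 0 with h | h
  · rw [Int.fract_neg_eq_zero.mpr h, h]
  · rw [Int.fract_neg h]; ring

lemma B2_ratCast (q : ℚ) : B2 (q : ℝ) = ((Int.fract q ^ 2 - Int.fract q + 1/6 : ℚ) : ℝ) := by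
  unfold B2; push_cast [Rat.cast_fract]; ring

noncomputable def B1q (q : ℚ) : ℚ := if q.den = 1 then 0 else Int.fract q - 1/2

lemma B1_ratCast (q : ℚ) : B1 (q : ℝ) = (B1q q : ℝ) := by
  unfold B1 B1q
  have hiff : (∃ n : ℤ, (n : ℝ) = (q : ℝ)) ↔ q.den = 1 := by
    constructor
    · rintro ⟨n, hn⟩
      have : (n : ℚ) = q := by exact_mod_cast hn
      rw [← this]; exact Rat.den_intCast n
    · intro h
      exact ⟨q.num, by exact_mod_cast congrArg (fun r : ℚ => (r : ℝ)) ((Rat.den_eq_one_iff q).mp h)⟩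
  simp only [hiff]
  split_ifs
  · simp
  · push_cast [Rat.cast_fract]; ring

lemma DR_rat (a c : ℤ) (x₁ x₂ : ℚ) :
    DR a c (x₁ : ℝ) (x₂ : ℝ) = ((∑ m ∈ Finset.range c.natAbs,
      B1q (x₁ + (x₂ + m) * a / c) * B1q ((x₂ + m) / c) : ℚ) : ℝ) := by
  unfold DR
  push_cast
  refine Finset.sum_congr rfl fun m _ => ?_
  have e1 : (x₁ : ℝ) + ((x₂ : ℝ) + m) * a / c = ((x₁ + (x₂ + m) * a / c : ℚ) : ℝ) := by
    push_cast; ring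
  have e2 : ((x₂ : ℝ) + m) / c = (((x₂ + m) / c : ℚ) : ℝ) := by push_cast; ring
  rw [e1, e2, B1_ratCast, B1_ratCast]

/-- **Theorem (Statement 3).** Rationality of `𝔷₀(γ)(x,ω)` when `ω` is an eigenvector. -/
theorem statement3 (a b c d : ℤ) (hdet : a * d - b * c = 1) (hc : c ≠ 0)
    (x₁ x₂ : ℚ) (ω₁ ω₂ : ℝ) (hω : LinearIndependent ℚ ![ω₁, ω₂]) (α : ℝ)
    (h1 : (a : ℝ) * ω₁ + c * ω₂ = α * ω₁) (h2 : (b : ℝ) * ω₁ + d * ω₂ = α * ω₂)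
    (h3 : ∃ m n : ℤ,
      α⁻¹ * ((x₁ : ℝ) * ω₁ + (x₂ : ℝ) * ω₂) - ((x₁ : ℝ) * ω₁ + (x₂ : ℝ) * ω₂)
        = (m : ℝ) * ω₁ + (n : ℝ) * ω₂) :
    Z0 a c x₁ x₂ ω₁ ω₂
      = ((a : ℝ) + (d : ℝ)) / (2 * c) * B2 (x₂ : ℝ)
        + Real.sign (c : ℝ) * DR (-a) c (x₁ : ℝ) (x₂ : ℝ)
        - Real.sign ((c : ℝ) * α) / 4 * indZ x₁ * indZ x₂
    ∧ ∃ q : ℚ, Z0 a c x₁ x₂ ω₁ ω₂ = (q : ℝ) := by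
  have hω₁ : ω₁ ≠ 0 := by
    have := hω.ne_zero 0
    simpa using this
  have hcR : (c : ℝ) ≠ 0 := Int.cast_ne_zero.mpr hc
  have hdetR : (a : ℝ) * d - b * c = 1 := by exact_mod_cast hdet
  set τ : ℝ := ω₂ / ω₁ with hτdef
  have hτ : ω₂ = τ * ω₁ := by rw [hτdef, div_mul_cancel₀ _ hω₁]
  have hα : α = (a : ℝ) + c * τ := by
    have h : α * ω₁ = ((a : ℝ) + c * τ) * ω₁ := by rw [← h1, hτ]; ring
    exact mul_right_cancel₀ hω₁ h
  have hq : α * τ = (b : ℝ) + d * τ := by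
    have h : (α * τ) * ω₁ = ((b : ℝ) + d * τ) * ω₁ := by
      have hh : α * ω₂ = (b : ℝ) * ω₁ + d * ω₂ := h2.symm
      rw [hτ] at hh; linear_combination hh
    exact mul_right_cancel₀ hω₁ h
  have hirr : ∀ q : ℚ, τ ≠ (q : ℝ) := by
    intro q hqe
    rw [LinearIndependent.pair_iff] at hω
    have h := hω (-q) 1 (by
      rw [Rat.smul_def, Rat.smul_def]
      have hω₂ : ω₂ = (q : ℝ) * ω₁ := by rw [hτ, hqe]
      push_cast
      rw [hω₂]; ring)
    simp at h
  have hαne : α ≠ 0 := by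
    intro h0
    refine hirr (-(a : ℚ) / c) ?_
    push_cast
    rw [eq_div_iff hcR]
    have h := hα; rw [h0] at h
    linear_combination -h
  have hinv : α * ((d : ℝ) - c * τ) = 1 := by
    linear_combination (d : ℝ) * hα - (c : ℝ) * hq + hdetR
  obtain ⟨m, n, hmn⟩ := h3
  have h4 : ((x₁ : ℝ) * ω₁ + x₂ * ω₂) - α * ((x₁ : ℝ) * ω₁ + x₂ * ω₂)
      = α * ((m : ℝ) * ω₁) + α * ((n : ℝ) * ω₂) := by
    linear_combination α * hmn - ((x₁ : ℝ) * ω₁ + (x₂ : ℝ) * ω₂) * (mul_inv_cancel₀ hαne)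
  have h5 : ((x₁ - a * x₁ - b * x₂ - m * a - n * b : ℚ) : ℝ) * ω₁
      + ((x₂ - c * x₁ - d * x₂ - m * c - n * d : ℚ) : ℝ) * ω₂ = 0 := by
    push_cast
    linear_combination h4 - ((m : ℝ) + (x₁ : ℝ)) * h1 - ((n : ℝ) + (x₂ : ℝ)) * h2
  have hpair := (LinearIndependent.pair_iff.mp hω)
    (x₁ - a * x₁ - b * x₂ - m * a - n * b) (x₂ - c * x₁ - d * x₂ - m * c - n * d)
    (by rw [Rat.smul_def, Rat.smul_def]; exact h5)
  have he₁ : (x₁ - a * x₁ - b * x₂ - m * a - n * b : ℚ) = 0 := hpair.1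
  have he₂ : (x₂ - c * x₁ - d * x₂ - m * c - n * d : ℚ) = 0 := hpair.2
  have hdetQ : (a : ℚ) * d - b * c = 1 := by exact_mod_cast hdet
  have hz : (c : ℚ) * x₁ - a * x₂ = -x₂ - n := by
    linear_combination (-(a : ℚ)) * he₂ + (c : ℚ) * he₁ - (x₂ + n) * hdetQ
  have hg : Int.gcd a c = 1 :=
    Int.isCoprime_iff_gcd_eq_one.mp ⟨d, -b, by linear_combination hdet⟩
  have hB2eq : B2 ((c : ℝ) * x₁ - (a : ℝ) * x₂) = B2 (x₂ : ℝ) := by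
    have harg : (c : ℝ) * x₁ - (a : ℝ) * x₂ = -(x₂ : ℝ) + ((-n : ℤ) : ℝ) := by
      have h := congrArg (fun r : ℚ => (r : ℝ)) hz
      push_cast at h ⊢
      linarith
    rw [harg, B2_add_int, B2_neg]
  have hZ0 : Z0 a c x₁ x₂ ω₁ ω₂
      = ((a : ℝ) + (d : ℝ)) / (2 * c) * B2 (x₂ : ℝ)
        + Real.sign (c : ℝ) * DR (-a) c (x₁ : ℝ) (x₂ : ℝ)
        - Real.sign ((c : ℝ) * α) / 4 * indZ x₁ * indZ x₂ := by
    unfold Z0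
    rw [hg]
    rw [← hτdef, ← hα]
    have e : ((c : ℝ) / ((1 : ℕ) : ℝ)) * (x₁ : ℝ) - ((a : ℝ) / ((1 : ℕ) : ℝ)) * (x₂ : ℝ)
        = (c : ℝ) * x₁ - (a : ℝ) * x₂ := by norm_num
    rw [e, hB2eq]
    have e2 : (((1 : ℕ) : ℝ)) ^ 2 = 1 := by norm_num
    rw [e2]
    have key : (1 : ℝ) / (2 * c * α) * B2 (x₂ : ℝ) + α / (2 * c) * B2 (x₂ : ℝ)
        = ((a : ℝ) + (d : ℝ)) / (2 * c) * B2 (x₂ : ℝ) := by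
      have h1' : (1 : ℝ) / (2 * c * α) = ((d : ℝ) - c * τ) / (2 * c) := by
        rw [div_eq_div_iff (mul_ne_zero (mul_ne_zero two_ne_zero hcR) hαne)
          (mul_ne_zero two_ne_zero hcR)]
        linear_combination (-(2 : ℝ) * c) * hinv
      rw [h1', hα]; ring
    linarith [key]
  refine ⟨hZ0, ?_⟩
  rw [hZ0]
  obtain ⟨qd, hqd⟩ : ∃ q : ℚ, DR (-a) c (x₁ : ℝ) (x₂ : ℝ) = (q : ℝ) := ⟨_, DR_rat _ _ _ _⟩
  obtain ⟨s, hs⟩ : ∃ s : ℚ, Real.sign (c : ℝ) = (s : ℝ) := by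
    rcases lt_or_gt_of_ne hcR with h | h
    · exact ⟨-1, by rw [Real.sign_of_neg h]; norm_num⟩
    · exact ⟨1, by rw [Real.sign_of_pos h]; norm_num⟩
  obtain ⟨t, ht⟩ : ∃ t : ℚ, Real.sign ((c : ℝ) * α) = (t : ℝ) := by
    rcases lt_or_gt_of_ne (mul_ne_zero hcR hαne) with h | h
    · exact ⟨-1, by rw [Real.sign_of_neg h]; norm_num⟩
    · exact ⟨1, by rw [Real.sign_of_pos h]; norm_num⟩
  have hi₁ : indZ x₁ = ((if x₁.den = 1 then (1 : ℚ) else 0) : ℝ) := by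
    unfold indZ; split_ifs <;> norm_num
  have hi₂ : indZ x₂ = ((if x₂.den = 1 then (1 : ℚ) else 0) : ℝ) := by
    unfold indZ; split_ifs <;> norm_num
  refine ⟨((a : ℚ) + d) / (2 * c) * (Int.fract x₂ ^ 2 - Int.fract x₂ + 1 / 6)
      + s * qd - t / 4 * (if x₁.den = 1 then (1 : ℚ) else 0)
        * (if x₂.den = 1 then (1 : ℚ) else 0), ?_⟩
  rw [hqd, hs, ht, hi₁, hi₂, B2_ratCast]
  split_ifs <;> push_cast <;> ring
end

section
/- Let γ=((a,b),(c,d)) ∈ SL₂(ℤ) with c>0 and ℓ_γ := gcd(c,a−1) > 1, let x=(x₁,0) with x₁ ∈ ℓ_γ⁻¹ℤ ∖ ℤ, and let ω=(ω₁,ω₂) ∈ ℝ² have entries linearly independent over ℚ; set τ := ω₂/ω₁. Then 𝔷₀(γ)(x,ω) − 𝔷₀(γ)(ℓ_γ·x, ℓ_γ⁻¹·ω) = sgn(a+cτ)/4 + (1/2)·B̄₁(d·x₁) + (c/2)·{x₁} − Σ_{m=1}^{c{x₁}} {m·d/c}, where c{x₁} is a positive integer. -/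
open scoped Pointwise Classical
open MeasureTheory

lemma B1_add_int (y : ℝ) (k : ℤ) : B1 (y + k) = B1 y := by
  unfold B1
  rw [Int.fract_add_intCast]
  by_cases h : ∃ n : ℤ, (n : ℝ) = y
  · obtain ⟨n, hn⟩ := h
    rw [if_pos ⟨n + k, by push_cast; linarith⟩, if_pos ⟨n, hn⟩]
  · rw [if_neg h, if_neg]
    rintro ⟨n, hn⟩
    exact h ⟨n - k, by push_cast; linarith⟩

lemma B1_intCast (k : ℤ) : B1 (k : ℝ) = 0 := by
  unfold B1; rw [if_pos ⟨k, rfl⟩]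

lemma B1_zero : B1 0 = 0 := by
  simpa using B1_intCast 0

lemma B1_div_congr (c : ℤ) (hc : c ≠ 0) (k k' : ℤ) (h : c ∣ k - k') :
    B1 ((k : ℝ) / c) = B1 ((k' : ℝ) / c) := by
  obtain ⟨t, ht⟩ := h
  have hc' : (c : ℝ) ≠ 0 := by exact_mod_cast hc
  have hk : (k : ℝ) / c = (k' : ℝ) / c + t := by
    have : k = k' + c * t := by linarith
    rw [this]; push_cast
    field_simp
  rw [hk, B1_add_int]

lemma not_dvd_of_lt {c k : ℤ} (h0 : 0 < k) (h1 : k < c) : ¬ c ∣ k :=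
  fun h => absurd (Int.le_of_dvd h0 h) (not_le.mpr h1)

lemma B1_div_eq (c k : ℤ) (hc : 0 < c) (h : ¬ c ∣ k) :
    B1 ((k : ℝ) / c) = Int.fract ((k : ℝ) / c) - 1 / 2 := by
  unfold B1
  rw [if_neg]
  rintro ⟨n, hn⟩
  apply h
  have hc' : (c : ℝ) ≠ 0 := by exact_mod_cast hc.ne'
  have : (k : ℝ) = n * c := by field_simp at hn; linarith
  have hkk : k = n * c := by exact_mod_cast this
  exact ⟨n, by rw [hkk, mul_comm]⟩

lemma B2_intCast (k : ℤ) : B2 (k : ℝ) = 1 / 6 := by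
  unfold B2; rw [Int.fract_intCast]; ring


lemma mod_mul_inv (c : ℤ) (hc : 0 < c) (u v : ℤ) (huv : c ∣ u * v - 1)
    (m : ℤ) (h0 : 0 ≤ m) (h1 : m < c) : ((m * u % c) * v) % c = m := by
  rw [Int.mul_emod, Int.emod_emod_of_dvd _ dvd_rfl, ← Int.mul_emod]
  have hd : c ∣ m - m * u * v := by
    have h2 : m - m * u * v = -(m * (u * v - 1)) := by ring
    rw [h2]; exact dvd_neg.mpr (huv.mul_left m)
  have h3 : (m * u * v) % c = m % c := Int.modEq_iff_dvd.mpr hd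
  rw [h3, Int.emod_eq_of_lt h0 h1]

lemma sum_range_mul (c : ℕ) (hc : 0 < c) (u v : ℤ) (huv : (c : ℤ) ∣ u * v - 1)
    (F : ℤ → ℝ) (hF : ∀ x y : ℤ, (c : ℤ) ∣ x - y → F x = F y) :
    ∑ m ∈ Finset.range c, F ((m : ℤ) * u) = ∑ j ∈ Finset.range c, F (j : ℤ) := by
  have hc' : (0 : ℤ) < c := by exact_mod_cast hc
  have hvu : (c : ℤ) ∣ v * u - 1 := by
    have : v * u - 1 = u * v - 1 := by ring
    rw [this]; exact huv
  refine Finset.sum_nbij' (fun m => (((m : ℤ) * u) % c).toNat)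
    (fun j => (((j : ℤ) * v) % c).toNat) ?_ ?_ ?_ ?_ ?_
  · intro m _
    have h1 := Int.emod_nonneg ((m : ℤ) * u) hc'.ne'
    have h2 := Int.emod_lt_of_pos ((m : ℤ) * u) hc'
    simp only [Finset.mem_range]; omega
  · intro j _
    have h1 := Int.emod_nonneg ((j : ℤ) * v) hc'.ne'
    have h2 := Int.emod_lt_of_pos ((j : ℤ) * v) hc'
    simp only [Finset.mem_range]; omega
  · intro m hm
    simp only [Finset.mem_range] at hm
    show ((((((m : ℤ) * u) % c).toNat : ℤ) * v) % c).toNat = m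
    have h1 := Int.emod_nonneg ((m : ℤ) * u) hc'.ne'
    have key := mod_mul_inv (c : ℤ) hc' u v huv m (by positivity) (by exact_mod_cast hm)
    rw [Int.toNat_of_nonneg h1]
    omega
  · intro j hj
    simp only [Finset.mem_range] at hj
    show ((((((j : ℤ) * v) % c).toNat : ℤ) * u) % c).toNat = j
    have h1 := Int.emod_nonneg ((j : ℤ) * v) hc'.ne'
    have key := mod_mul_inv (c : ℤ) hc' v u hvu j (by positivity) (by exact_mod_cast hj)
    rw [Int.toNat_of_nonneg h1]
    omega
  · intro m _
    show F ((m : ℤ) * u) = F (((((m : ℤ) * u) % c).toNat : ℤ))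
    have h1 := Int.emod_nonneg ((m : ℤ) * u) hc'.ne'
    rw [Int.toNat_of_nonneg h1]
    apply hF
    exact ⟨(m : ℤ) * u / c, by rw [Int.emod_def]; ring⟩

lemma sum_B1_range (c : ℕ) (hc : 0 < c) :
    ∑ k ∈ Finset.range c, B1 ((k : ℝ) / (c : ℝ)) = 0 := by
  have hc' : (0 : ℤ) < (c : ℤ) := by exact_mod_cast hc
  have hcr : (0 : ℝ) < (c : ℝ) := by exact_mod_cast hc
  have step : ∀ k ∈ Finset.range c,
      B1 ((k : ℝ) / (c : ℝ)) = ((k : ℝ) / c - 1 / 2) + (if k = 0 then (1 : ℝ) / 2 else 0) := by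
    intro k hk
    simp only [Finset.mem_range] at hk
    by_cases h0 : k = 0
    · subst h0; simp [B1_zero]
    · rw [if_neg h0]
      have hB := B1_div_eq (c : ℤ) (k : ℤ) hc'
        (not_dvd_of_lt (by exact_mod_cast Nat.pos_of_ne_zero h0) (by exact_mod_cast hk))
      push_cast at hB
      rw [hB, Int.fract_eq_self.mpr ⟨by positivity, by rw [div_lt_one hcr]; exact_mod_cast hk⟩]
      ring
  rw [Finset.sum_congr rfl step, Finset.sum_add_distrib,
    Finset.sum_ite_eq' (Finset.range c) 0 (fun _ => (1 : ℝ) / 2),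
    if_pos (Finset.mem_range.mpr hc), Finset.sum_sub_distrib]
  have gauss : (∑ k ∈ Finset.range c, (k : ℝ)) = c * (c - 1) / 2 := by
    have h2 := Finset.sum_range_id_mul_two c
    have h3 : ((∑ i ∈ Finset.range c, i : ℕ) : ℝ) * 2 = (c : ℝ) * ((c : ℝ) - 1) := by
      rw [← Nat.cast_ofNat, ← Nat.cast_mul, h2]
      push_cast [Nat.cast_sub hc]
      ring
    push_cast at h3 ⊢
    linarith
  rw [← Finset.sum_div, gauss, Finset.sum_const, Finset.card_range]
  field_simp
  ring

lemma Dval (c N : ℕ) (hN0 : 0 < N) (hNc : N < c) (j : ℕ) (hj : j < c) :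
    B1 (((N : ℝ) + (j : ℝ)) / (c : ℝ)) - B1 ((j : ℝ) / (c : ℝ))
      = (N : ℝ) / c - (if j = 0 then (1 : ℝ) / 2 else 0)
        - (if j = c - N then (1 : ℝ) / 2 else 0)
        - (if c - N < j then (1 : ℝ) else 0) := by
  have hc : 0 < c := hN0.trans hNc
  have hc' : (0 : ℤ) < (c : ℤ) := by exact_mod_cast hc
  have hcr : (0 : ℝ) < (c : ℝ) := by exact_mod_cast hc
  have fr_self : ∀ k : ℕ, 0 < k → k < c → B1 ((k : ℝ) / (c : ℝ)) = (k : ℝ) / c - 1 / 2 := by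
    intro k h0 h1
    have hB := B1_div_eq (c : ℤ) (k : ℤ) hc'
      (not_dvd_of_lt (by exact_mod_cast h0) (by exact_mod_cast h1))
    push_cast at hB
    rw [hB, Int.fract_eq_self.mpr ⟨by positivity, by rw [div_lt_one hcr]; exact_mod_cast h1⟩]
  rcases Nat.eq_zero_or_pos j with h0 | h0
  · subst h0
    have e1 : ((0 : ℕ) : ℝ) = (0 : ℝ) := by norm_num
    rw [if_pos rfl, if_neg (by omega), if_neg (by omega)]
    have := fr_self N hN0 hNc
    push_cast
    rw [zero_div, B1_zero, add_zero]
    push_cast at this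
    rw [this]; ring
  · rcases lt_trichotomy j (c - N) with h1 | h1 | h1
    · -- 0 < j < c - N
      rw [if_neg (by omega), if_neg (by omega), if_neg (by omega)]
      have hNj : B1 (((N + j : ℕ) : ℝ) / c) = ((N + j : ℕ) : ℝ) / c - 1 / 2 :=
        fr_self (N + j) (by omega) (by omega)
      have hjj := fr_self j h0 hj
      push_cast at hNj
      rw [hNj, hjj]; ring
    · -- j = c - N
      have hNj : (N : ℝ) + (j : ℝ) = (c : ℝ) := by
        have : N + j = c := by omega
        exact_mod_cast this
      rw [if_neg (by omega), if_pos h1, if_neg (by omega), hNj, div_self hcr.ne']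
      have h1' : B1 (1 : ℝ) = 0 := by simpa using B1_intCast 1
      have hjj := fr_self j h0 hj
      have hjr : (j : ℝ) = (c : ℝ) - (N : ℝ) := by
        have : j + N = c := by omega
        have := (by exact_mod_cast this : (j : ℝ) + N = c)
        linarith
      rw [h1', hjj, hjr]; field_simp; ring
    · -- c - N < j < c
      rw [if_neg (by omega), if_neg (by omega), if_pos h1]
      have hfr : B1 (((N + j : ℕ) : ℝ) / c) = ((N + j : ℕ) : ℝ) / c - 1 - 1 / 2 := by
        have hB := B1_div_eq (c : ℤ) ((N : ℤ) + j) hc' (by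
          intro hdvd
          have h2 : (c : ℤ) ∣ ((N : ℤ) + j - c) := (dvd_sub_right hdvd).mpr dvd_rfl
          have h3 : (0 : ℤ) < (N : ℤ) + j - c := by omega
          exact not_dvd_of_lt h3 (by omega) h2)
        push_cast at hB
        push_cast
        rw [hB]
        have hge : (c : ℝ) ≤ (N : ℝ) + j := by
          have : c ≤ N + j := by omega
          exact_mod_cast this
        have hlt : (N : ℝ) + j < 2 * c := by
          have : N + j < 2 * c := by omega
          exact_mod_cast this
        have h01 : (0 : ℝ) ≤ ((N : ℝ) + j) / c - 1 ∧ ((N : ℝ) + j) / c - 1 < 1 := by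
          constructor
          · have := (one_le_div hcr).mpr hge
            linarith
          · have := (div_lt_iff₀ hcr).mpr (by linarith : (N : ℝ) + j < 2 * c)
            linarith
        have : Int.fract (((N : ℝ) + j) / c) = ((N : ℝ) + j) / c - 1 := by
          calc Int.fract (((N : ℝ) + j) / c)
              = Int.fract ((((N : ℝ) + j) / c - 1) + ((1 : ℤ) : ℝ)) := by norm_num
            _ = Int.fract (((N : ℝ) + j) / c - 1) := Int.fract_add_intCast _ _
            _ = ((N : ℝ) + j) / c - 1 := Int.fract_eq_self.mpr h01
        rw [this]
      have hjj := fr_self j h0 hj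
      push_cast at hfr
      rw [hfr, hjj]; ring

lemma B1_div_congr' (c : ℕ) (hc : 0 < c) (k k' : ℤ) (h : (c : ℤ) ∣ k - k') :
    B1 ((k : ℝ) / (c : ℝ)) = B1 ((k' : ℝ) / (c : ℝ)) := by
  have h2 := B1_div_congr (c : ℤ) (by exact_mod_cast hc.ne' : (c : ℤ) ≠ 0) k k' h
  simpa using h2

lemma B1_div_eq' (c : ℕ) (hc : 0 < c) (k : ℤ) (h : ¬ (c : ℤ) ∣ k) :
    B1 ((k : ℝ) / (c : ℝ)) = Int.fract ((k : ℝ) / (c : ℝ)) - 1 / 2 := by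
  have h2 := B1_div_eq (c : ℤ) k (by exact_mod_cast hc) h
  simpa using h2

lemma DR_diff (c N : ℕ) (a d : ℤ) (hN0 : 0 < N) (hNc : N < c)
    (had : (c : ℤ) ∣ a * d - 1) :
    ∑ m ∈ Finset.range c,
      (B1 ((((N : ℤ) - (m : ℤ) * a : ℤ) : ℝ) / (c : ℝ)) -
        B1 (((-((m : ℤ) * a) : ℤ) : ℝ) / (c : ℝ))) * B1 (((m : ℤ) : ℝ) / (c : ℝ))
    = (1 / 2) * B1 ((((N : ℤ) * d : ℤ) : ℝ) / (c : ℝ)) + (N : ℝ) / 2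
      - ∑ m ∈ Finset.Icc 1 N, Int.fract ((((m : ℤ) * d : ℤ) : ℝ) / (c : ℝ)) := by
  have hc : 0 < c := hN0.trans hNc
  have hc' : (0 : ℤ) < (c : ℤ) := by exact_mod_cast hc
  have hcr : (0 : ℝ) < (c : ℝ) := by exact_mod_cast hc
  obtain ⟨k, hk⟩ := had
  have hcop : IsCoprime (c : ℤ) d := ⟨-k, a, by linarith⟩
  have had' : (c : ℤ) ∣ a * d - 1 := ⟨k, hk⟩
  have ndvd : ∀ i : ℕ, 0 < i → i < c → ¬ (c : ℤ) ∣ (i : ℤ) * d := by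
    intro i h0 h1 hdvd
    exact not_dvd_of_lt (by exact_mod_cast h0) (by exact_mod_cast h1)
      (hcop.dvd_of_dvd_mul_right hdvd)
  set F : ℤ → ℝ := fun t =>
    (B1 ((((N : ℤ) + t : ℤ) : ℝ) / (c : ℝ)) - B1 ((t : ℝ) / (c : ℝ))) *
      B1 (((-(t * d) : ℤ) : ℝ) / (c : ℝ)) with hF_def
  set g : ℕ → ℝ := fun j => B1 (((-((j : ℤ) * d) : ℤ) : ℝ) / (c : ℝ)) with hg_def
  have step1 : ∀ m ∈ Finset.range c,
      (B1 ((((N : ℤ) - (m : ℤ) * a : ℤ) : ℝ) / (c : ℝ)) -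
        B1 (((-((m : ℤ) * a) : ℤ) : ℝ) / (c : ℝ))) * B1 (((m : ℤ) : ℝ) / (c : ℝ))
      = F ((m : ℤ) * (-a)) := by
    intro m _
    simp only [hF_def]
    rw [show (N : ℤ) + (m : ℤ) * (-a) = (N : ℤ) - (m : ℤ) * a from by ring]
    rw [show ((m : ℤ) * (-a) : ℤ) = -((m : ℤ) * a) from by ring]
    rw [show -(-((m : ℤ) * a) * d) = (m : ℤ) * a * d from by ring]
    rw [B1_div_congr' c hc ((m : ℤ) * a * d) (m : ℤ)
      ⟨(m : ℤ) * k, by rw [show (m:ℤ)*a*d - m = m * (a*d-1) from by ring, hk]; ring⟩]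
  rw [Finset.sum_congr rfl step1]
  have hFper : ∀ x y : ℤ, (c : ℤ) ∣ x - y → F x = F y := by
    rintro x y ⟨t, ht⟩
    simp only [hF_def]
    rw [B1_div_congr' c hc ((N : ℤ) + x) ((N : ℤ) + y)
        (by rw [show (N:ℤ) + x - ((N:ℤ) + y) = x - y from by ring]; exact ⟨t, ht⟩),
      B1_div_congr' c hc x y ⟨t, ht⟩,
      B1_div_congr' c hc (-(x*d)) (-(y*d))
        (by rw [show -(x*d) - -(y*d) = (x - y) * (-d) from by ring, ht]; exact ⟨-(t*d), by ring⟩)]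
  rw [sum_range_mul c hc (-a) (-d)
    (by rw [show (-a) * (-d) - 1 = a * d - 1 from by ring]; exact had') F hFper]
  have step3 : ∀ j ∈ Finset.range c, F (j : ℤ) =
      ((N : ℝ)/c - (if j = 0 then (1:ℝ)/2 else 0) - (if j = c - N then (1:ℝ)/2 else 0)
        - (if c - N < j then (1:ℝ) else 0)) * g j := by
    intro j hj
    simp only [Finset.mem_range] at hj
    have hD := Dval c N hN0 hNc j hj
    simp only [hF_def, hg_def]
    have c1 : (((N : ℤ) + (j : ℤ) : ℤ) : ℝ) = (N : ℝ) + (j : ℝ) := by push_cast; ring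
    have c2 : (((j : ℤ)) : ℝ) = (j : ℝ) := by push_cast; ring
    rw [c1, c2, hD]
  rw [Finset.sum_congr rfl step3]
  simp only [sub_mul]
  rw [Finset.sum_sub_distrib, Finset.sum_sub_distrib, Finset.sum_sub_distrib]
  have hg0 : ∑ j ∈ Finset.range c, g j = 0 := by
    have e : ∀ j ∈ Finset.range c, g j = (fun t : ℤ => B1 ((t : ℝ)/(c : ℝ))) ((j : ℤ) * (-d)) := by
      intro j _
      simp only [hg_def]
      rw [show -((j:ℤ)*d) = (j:ℤ) * (-d) from by ring]
    rw [Finset.sum_congr rfl e, sum_range_mul c hc (-d) (-a)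
      (by rw [show (-d) * (-a) - 1 = a * d - 1 from by ring]; exact had')
      (fun t : ℤ => B1 ((t : ℝ) / (c : ℝ)))
      (fun x y h => B1_div_congr' c hc x y h)]
    have e2 : ∀ j ∈ Finset.range c, B1 (((j : ℤ) : ℝ)/(c : ℝ)) = B1 ((j : ℝ)/(c : ℝ)) := by
      intro j _
      norm_num
    rw [Finset.sum_congr rfl e2]
    exact sum_B1_range c hc
  rw [← Finset.mul_sum, hg0, mul_zero]
  have hT2 : ∑ j ∈ Finset.range c, (if j = 0 then (1:ℝ)/2 else 0) * g j = 0 := by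
    rw [Finset.sum_eq_single 0 (fun b _ hb => by rw [if_neg hb, zero_mul])
      (fun h => absurd (Finset.mem_range.mpr hc) h)]
    simp [hg_def, B1_zero]
  have hT3 : ∑ j ∈ Finset.range c, (if j = c - N then (1:ℝ)/2 else 0) * g j
      = 1/2 * B1 ((((N : ℤ) * d : ℤ) : ℝ) / (c : ℝ)) := by
    rw [Finset.sum_eq_single (c - N) (fun b _ hb => by rw [if_neg hb, zero_mul])
      (fun h => absurd (Finset.mem_range.mpr (by omega)) h)]
    rw [if_pos rfl]
    congr 1
    simp only [hg_def]
    apply B1_div_congr' c hc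
    have hcast : ((c - N : ℕ) : ℤ) = (c : ℤ) - N := by omega
    rw [hcast]
    exact ⟨-d, by ring⟩
  have hT4 : ∑ j ∈ Finset.range c, (if c - N < j then (1:ℝ) else 0) * g j
      = (∑ i ∈ Finset.Ico 1 N, Int.fract ((((i : ℤ) * d : ℤ) : ℝ)/(c : ℝ))) - ((N : ℝ) - 1)/2 := by
    have e : ∀ j ∈ Finset.range c,
        (if c - N < j then (1:ℝ) else 0) * g j = (if c - N < j then g j else 0) := by
      intro j _; split_ifs <;> simp
    rw [Finset.sum_congr rfl e, ← Finset.sum_filter]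
    have hfil : (Finset.range c).filter (fun j => c - N < j) = Finset.Ico (c - N + 1) c := by
      ext x
      simp only [Finset.mem_filter, Finset.mem_range, Finset.mem_Ico]
      omega
    rw [hfil]
    have hbij : ∑ j ∈ Finset.Ico (c - N + 1) c, g j = ∑ i ∈ Finset.Ico 1 N, g (c - i) := by
      refine Finset.sum_nbij' (fun j => c - j) (fun i => c - i) ?_ ?_ ?_ ?_ ?_
      · intro x hx; simp only [Finset.mem_Ico] at *; omega
      · intro x hx; simp only [Finset.mem_Ico] at *; omega
      · intro x hx; simp only [Finset.mem_Ico] at hx; show c - (c - x) = x; omega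
      · intro x hx; simp only [Finset.mem_Ico] at hx; show c - (c - x) = x; omega
      · intro x hx; simp only [Finset.mem_Ico] at hx
        rw [show c - (c - x) = x from by omega]
    rw [hbij]
    have e2 : ∀ i ∈ Finset.Ico 1 N, g (c - i)
        = Int.fract ((((i : ℤ) * d : ℤ) : ℝ)/(c : ℝ)) - 1/2 := by
      intro i hi
      simp only [Finset.mem_Ico] at hi
      simp only [hg_def]
      have hcast : ((c - i : ℕ) : ℤ) = (c : ℤ) - i := by omega
      have hcg : B1 (((-(((c - i : ℕ) : ℤ) * d) : ℤ) : ℝ)/(c : ℝ))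
          = B1 ((((i : ℤ) * d : ℤ) : ℝ)/(c : ℝ)) := by
        apply B1_div_congr' c hc
        rw [hcast]
        exact ⟨-d, by ring⟩
      rw [hcg, B1_div_eq' c hc _ (ndvd i hi.1 (by omega))]
    rw [Finset.sum_congr rfl e2, Finset.sum_sub_distrib, Finset.sum_const, Nat.card_Ico,
      nsmul_eq_mul]
    push_cast [Nat.cast_sub (by omega : 1 ≤ N)]
    ring
  rw [hT2, hT3, hT4]
  have hIcc : ∑ m ∈ Finset.Icc 1 N, Int.fract ((((m : ℤ) * d : ℤ) : ℝ) / (c : ℝ))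
      = (∑ i ∈ Finset.Ico 1 N, Int.fract ((((i : ℤ) * d : ℤ) : ℝ)/(c : ℝ)))
        + Int.fract ((((N : ℤ) * d : ℤ) : ℝ)/(c : ℝ)) := by
    rw [← Finset.Ico_add_one_right_eq_Icc, Finset.sum_Ico_succ_top (by omega : 1 ≤ N)]
  rw [hIcc, B1_div_eq' c hc _ (ndvd N hN0 hNc)]
  ring

lemma sign_mul_pos (x y : ℝ) (hx : 0 < x) : Real.sign (x * y) = Real.sign y := by
  rcases lt_trichotomy y 0 with h | h | h
  · rw [Real.sign_of_neg h, Real.sign_of_neg (mul_neg_of_pos_of_neg hx h)]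
  · rw [h, mul_zero]
  · rw [Real.sign_of_pos h, Real.sign_of_pos (mul_pos hx h)]

/-- **Theorem (Statement 7).** Closed form for the difference of cocycle values. -/
theorem statement7 (a b c d : ℤ) (hdet : a * d - b * c = 1) (hc : 0 < c)
    (hl : 1 < Int.gcd c (a - 1)) (x₁ : ℚ)
    (hx : ∃ n : ℤ, x₁ = (n : ℚ) / (Int.gcd c (a - 1) : ℚ)) (hx' : x₁.den ≠ 1)
    (ω₁ ω₂ : ℝ) (hω : LinearIndependent ℚ ![ω₁, ω₂])
    (N : ℕ) (hN : (N : ℚ) = c * (x₁ - ⌊x₁⌋)) :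
    0 < N ∧
    Z0 a c x₁ 0 ω₁ ω₂
      - Z0 a c ((Int.gcd c (a - 1) : ℚ) * x₁) 0
          (ω₁ / (Int.gcd c (a - 1) : ℝ)) (ω₂ / (Int.gcd c (a - 1) : ℝ))
    = Real.sign ((a : ℝ) + c * (ω₂ / ω₁)) / 4
      + (1 / 2) * B1 ((d : ℝ) * (x₁ : ℝ))
      + (c : ℝ) / 2 * Int.fract (x₁ : ℝ)
      - ∑ m ∈ Finset.Icc 1 N, Int.fract ((m : ℝ) * d / c) := by
  obtain ⟨n, hxn⟩ := hx
  set L : ℕ := Int.gcd c (a - 1) with hL_def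
  have hL0 : 0 < L := by omega
  have hLQ : ((L : ℚ)) ≠ 0 := by positivity
  have hLc : (L : ℤ) ∣ c := Int.gcd_dvd_left c (a - 1)
  have hcr : (0 : ℝ) < (c : ℝ) := by exact_mod_cast hc
  have hcQ : (0 : ℚ) < (c : ℚ) := by exact_mod_cast hc
  have hfr0 : 0 < x₁ - ⌊x₁⌋ := by
    rcases lt_or_eq_of_le (by
      have := Int.fract_nonneg x₁
      rw [Int.fract] at this
      linarith : (0 : ℚ) ≤ x₁ - ⌊x₁⌋) with h | h
    · exact h
    · exfalso
      apply hx'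
      have : x₁ = (⌊x₁⌋ : ℚ) := by linarith
      rw [this]
      exact Rat.den_intCast _
  have hfr1 : x₁ - ⌊x₁⌋ < 1 := by
    have := Int.fract_lt_one x₁
    rw [Int.fract] at this
    linarith
  have hN0 : 0 < N := by
    have : (0 : ℚ) < (N : ℚ) := by rw [hN]; positivity
    exact_mod_cast this
  have hNcZ : (N : ℤ) < c := by
    have : (N : ℚ) < (c : ℚ) := by
      rw [hN]
      calc (c : ℚ) * (x₁ - ⌊x₁⌋) < (c : ℚ) * 1 := mul_lt_mul_of_pos_left hfr1 hcQ
        _ = c := by ring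
    exact_mod_cast this
  refine ⟨hN0, ?_⟩
  set C : ℕ := c.natAbs with hC_def
  have hCZ : ((C : ℤ)) = c := Int.natAbs_of_nonneg hc.le
  have hC0 : 0 < C := by omega
  have hCR : ((C : ℝ)) = (c : ℝ) := by exact_mod_cast congrArg (fun z : ℤ => (z : ℝ)) hCZ
  have hNC : N < C := by omega
  have had : ((C : ℤ)) ∣ a * d - 1 := by rw [hCZ]; exact ⟨b, by linarith⟩
  have hLR : ((L : ℝ)) ≠ 0 := by positivity
  have htau : ω₂ / (L : ℝ) / (ω₁ / (L : ℝ)) = ω₂ / ω₁ := by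
    rcases eq_or_ne ω₁ 0 with h | h
    · rw [h]; simp
    · field_simp
  have hcop : IsCoprime a c := ⟨d, -b, by linear_combination hdet⟩
  have hgcd : Int.gcd a c = 1 := Int.isCoprime_iff_gcd_eq_one.mp hcop
  -- rational values
  have hLx : ((L : ℚ)) * x₁ = (n : ℚ) := by rw [hxn]; field_simp
  obtain ⟨c', hc'⟩ := hLc
  have hcx : (c : ℚ) * x₁ = ((c' * n : ℤ) : ℚ) := by
    rw [hxn, hc']; push_cast; field_simp
  have hclx : (c : ℚ) * ((L : ℚ) * x₁) = ((c * n : ℤ) : ℚ) := by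
    rw [hLx]; push_cast; ring
  have hB2a : B2 ((c : ℝ) * (x₁ : ℝ)) = 1 / 6 := by
    have harg : (c : ℝ) * (x₁ : ℝ) = ((c' * n : ℤ) : ℝ) := by exact_mod_cast congrArg (Rat.cast (K := ℝ)) hcx
    rw [harg, B2_intCast]
  have hB2b : B2 ((c : ℝ) * (((L : ℚ) * x₁ : ℚ) : ℝ)) = 1 / 6 := by
    have harg : (c : ℝ) * (((L : ℚ) * x₁ : ℚ) : ℝ) = ((c * n : ℤ) : ℝ) := by
      exact_mod_cast congrArg (Rat.cast (K := ℝ)) hclx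
    rw [harg, B2_intCast]
  have hB20 : B2 (0 : ℝ) = 1 / 6 := by simpa using B2_intCast 0
  have hind1 : indZ x₁ = 0 := if_neg hx'
  have hind2 : indZ ((L : ℚ) * x₁) = 1 := by
    unfold indZ
    rw [hLx]
    simp [Rat.den_intCast]
  have hind0 : indZ 0 = 1 := by simp [indZ]
  have hsgn : Real.sign ((c : ℝ) * ((a : ℝ) + c * (ω₂ / ω₁)))
      = Real.sign ((a : ℝ) + c * (ω₂ / ω₁)) := sign_mul_pos _ _ hcr
  have hsc : Real.sign (c : ℝ) = 1 := Real.sign_of_pos hcr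
  have hNR : (N : ℝ) = (c : ℝ) * ((x₁ : ℝ) - (⌊x₁⌋ : ℝ)) := by
    exact_mod_cast congrArg (Rat.cast (K := ℝ)) hN
  have hXr : (x₁ : ℝ) = (⌊x₁⌋ : ℝ) + (N : ℝ) / (c : ℝ) := by
    field_simp
    linarith
  have hLxR : (((L : ℚ) * x₁ : ℚ) : ℝ) = ((n : ℤ) : ℝ) := by
    exact_mod_cast congrArg (Rat.cast (K := ℝ)) hLx
  have hfract : Int.fract (x₁ : ℝ) = (N : ℝ) / (c : ℝ) := by
    rw [Int.fract, Rat.floor_cast]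
    rw [hXr]
    ring
  have hB1d : B1 ((d : ℝ) * (x₁ : ℝ)) = B1 ((((N : ℤ) * d : ℤ) : ℝ) / (C : ℝ)) := by
    have harg : (d : ℝ) * (x₁ : ℝ)
        = (((N : ℤ) * d : ℤ) : ℝ) / (C : ℝ) + ((d * ⌊x₁⌋ : ℤ) : ℝ) := by
      rw [hXr, hCR]; push_cast; ring
    rw [harg, B1_add_int]
  have hDRdiff : DR (-a) c (x₁ : ℝ) 0 - DR (-a) c (((L : ℚ) * x₁ : ℚ) : ℝ) 0
      = (1 / 2) * B1 ((d : ℝ) * (x₁ : ℝ)) + (c : ℝ) / 2 * Int.fract (x₁ : ℝ)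
        - ∑ m ∈ Finset.Icc 1 N, Int.fract ((m : ℝ) * d / c) := by
    unfold DR
    rw [← Finset.sum_sub_distrib]
    have hpt : ∀ m ∈ Finset.range C,
        B1 ((x₁ : ℝ) + ((0 : ℝ) + m) * ((-a : ℤ) : ℝ) / (c : ℝ)) * B1 (((0 : ℝ) + m) / (c : ℝ))
          - B1 ((((L : ℚ) * x₁ : ℚ) : ℝ) + ((0 : ℝ) + m) * ((-a : ℤ) : ℝ) / (c : ℝ))
              * B1 (((0 : ℝ) + m) / (c : ℝ))
        = (B1 ((((N : ℤ) - (m : ℤ) * a : ℤ) : ℝ) / (C : ℝ)) -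
            B1 (((-((m : ℤ) * a) : ℤ) : ℝ) / (C : ℝ))) * B1 (((m : ℤ) : ℝ) / (C : ℝ)) := by
      intro m _
      have e1 : (x₁ : ℝ) + ((0 : ℝ) + m) * ((-a : ℤ) : ℝ) / (c : ℝ)
          = (((N : ℤ) - (m : ℤ) * a : ℤ) : ℝ) / (C : ℝ) + ((⌊x₁⌋ : ℤ) : ℝ) := by
        rw [hXr, hCR]; push_cast; ring
      have e2 : (((L : ℚ) * x₁ : ℚ) : ℝ) + ((0 : ℝ) + m) * ((-a : ℤ) : ℝ) / (c : ℝ)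
          = ((-((m : ℤ) * a) : ℤ) : ℝ) / (C : ℝ) + ((n : ℤ) : ℝ) := by
        rw [hLxR, hCR]; push_cast; ring
      have e3 : ((0 : ℝ) + m) / (c : ℝ) = ((m : ℤ) : ℝ) / (C : ℝ) := by
        rw [hCR]; push_cast; ring
      rw [e1, e2, e3, B1_add_int, B1_add_int]
      ring
    rw [Finset.sum_congr rfl hpt, DR_diff C N a d hN0 hNC had]
    rw [hB1d, hfract]
    have hsum : ∀ m ∈ Finset.Icc 1 N,
        Int.fract ((((m : ℤ) * d : ℤ) : ℝ) / (C : ℝ)) = Int.fract ((m : ℝ) * d / c) := by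
      intro m _
      congr 1
      rw [hCR]; push_cast; ring
    rw [Finset.sum_congr rfl hsum]
    have : (c : ℝ) / 2 * ((N : ℝ) / (c : ℝ)) = (N : ℝ) / 2 := by
      field_simp
    rw [this]
  simp only [Z0, hgcd]
  rw [htau]
  simp only [Nat.cast_one, one_pow, div_one, Rat.cast_zero, mul_zero, sub_zero]
  rw [hB2a, hB2b, hB20, hind1, hind2, hind0, hsgn, hsc]
  linear_combination hDRdiff
end

section
/- Let γ=((a,b),(c,d)) ∈ SL₂(ℤ) with c>0, and let x₁ ∈ ℚ with c·x₁ ∈ ℤ and x₁ ∉ ℤ. Then the number of integral points in the interior of the triangle T_{γ,x} := {x₁}·T_γ equals Σ_{m=1}^{c{x₁}−1} (⌊m·d/c⌋ − ⌊m·(d−1)/c⌋). -/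
open scoped Pointwise Classical
open MeasureTheory

lemma mem_tri_iff (a c : ℤ) (hc : 0 < c) (p : ℝ × ℝ) :
    p ∈ Tri a c ↔ 0 ≤ p.2 ∧ (c:ℝ) * p.1 ≤ ((a:ℝ) - 1) * p.2 ∧ (a:ℝ) * p.2 - c ≤ c * p.1 := by
  have hcR : (0:ℝ) < c := by exact_mod_cast hc
  constructor
  · intro hp
    have hconv : Convex ℝ {p : ℝ × ℝ | 0 ≤ p.2 ∧ (c:ℝ) * p.1 ≤ ((a:ℝ) - 1) * p.2 ∧ (a:ℝ) * p.2 - c ≤ c * p.1} := by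
      intro x hx y hy u v hu hv huv
      obtain ⟨h1, h2, h3⟩ := hx
      obtain ⟨h1', h2', h3'⟩ := hy
      refine ⟨?_, ?_, ?_⟩ <;>
        simp only [Prod.smul_fst, Prod.smul_snd, Prod.fst_add, Prod.snd_add, smul_eq_mul] <;>
        nlinarith [mul_le_mul_of_nonneg_left h2 hu, mul_le_mul_of_nonneg_left h2' hv,
          mul_le_mul_of_nonneg_left h3 hu, mul_le_mul_of_nonneg_left h3' hv,
          mul_nonneg hu h1, mul_nonneg hv h1']
    refine convexHull_min ?_ hconv hp
    intro q hq
    simp only [Set.mem_insert_iff, Set.mem_singleton_iff] at hq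
    rcases hq with rfl | rfl | rfl
    · exact ⟨le_refl 0, by norm_num, by norm_num; linarith⟩
    · exact ⟨hcR.le, le_of_eq (by ring), le_of_eq (by ring)⟩
    · exact ⟨le_refl 0, by norm_num; linarith, le_of_eq (by ring)⟩
  · rintro ⟨h1, h2, h3⟩
    obtain ⟨x, y⟩ := p
    simp only at h1 h2 h3 ⊢
    have hyc : y ≤ c := by nlinarith
    set v0 : ℝ × ℝ := ((0:ℝ), (0:ℝ)) with hv0
    set v1 : ℝ × ℝ := (((a:ℝ) - 1), (c:ℝ)) with hv1
    set v2 : ℝ × ℝ := ((-1:ℝ), (0:ℝ)) with hv2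
    have hm0 : v0 ∈ Tri a c := subset_convexHull ℝ _ (by simp [hv0])
    have hm1 : v1 ∈ Tri a c := subset_convexHull ℝ _ (by simp [hv1])
    have hm2 : v2 ∈ Tri a c := subset_convexHull ℝ _ (by simp [hv2])
    have hconv := convex_convexHull ℝ {((0 : ℝ), (0 : ℝ)), (((a : ℝ) - 1), (c : ℝ)), ((-1 : ℝ), (0 : ℝ))}
    rcases eq_or_lt_of_le hyc with hyc' | hyc'
    · -- y = c forces p = v1
      rw [hyc'] at h2 h3
      have hx1 : x = (a:ℝ) - 1 := by
        apply le_antisymm <;> nlinarith [hcR]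
      have : ((x, y) : ℝ × ℝ) = v1 := by rw [hv1, Prod.mk.injEq]; exact ⟨hx1, hyc'⟩
      rw [this]; exact hm1
    · set lam : ℝ := y / c with hlam
      have hlam0 : 0 ≤ lam := by positivity
      have hlam1 : lam < 1 := by rw [hlam, div_lt_one hcR]; exact hyc'
      set mu : ℝ := (((a:ℝ) - 1) * y - c * x) / (c - y) with hmu
      have hcy : (0:ℝ) < c - y := by linarith
      have hmu0 : 0 ≤ mu := by
        apply div_nonneg _ hcy.le; linarith
      have hmu1 : mu ≤ 1 := by
        rw [div_le_one hcy]; nlinarith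
      have hw : mu • v2 + (1 - mu) • v0 ∈ Tri a c :=
        hconv hm2 hm0 hmu0 (by linarith) (by ring)
      have key : ((x, y) : ℝ × ℝ) = lam • v1 + (1 - lam) • (mu • v2 + (1 - mu) • v0) := by
        rw [hv0, hv1, hv2, Prod.ext_iff]
        constructor
        · simp only [Prod.smul_fst, Prod.fst_add, smul_eq_mul, hlam, hmu]
          field_simp
          ring
        · simp only [Prod.smul_snd, Prod.snd_add, smul_eq_mul, hlam]
          field_simp
          ring
      rw [key]
      exact hconv hm1 hw hlam0 (by linarith) (by ring)

lemma mem_smul_tri_iff (a c : ℤ) (hc : 0 < c) (t : ℝ) (ht : 0 < t) (p : ℝ × ℝ) :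
    p ∈ t • Tri a c ↔
      0 ≤ p.2 ∧ (c:ℝ) * p.1 ≤ ((a:ℝ) - 1) * p.2 ∧ (a:ℝ) * p.2 - t * c ≤ c * p.1 := by
  rw [Set.mem_smul_set_iff_inv_smul_mem₀ ht.ne' _ _, mem_tri_iff a c hc]
  have h1 : (t⁻¹ • p).1 = t⁻¹ * p.1 := rfl
  have h2 : (t⁻¹ • p).2 = t⁻¹ * p.2 := rfl
  have htinv : (0:ℝ) < t⁻¹ := by positivity
  rw [h1, h2]
  have e1 : (0 ≤ t⁻¹ * p.2) ↔ (0 ≤ p.2) := mul_nonneg_iff_of_pos_left htinv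
  have e2 : ((c:ℝ) * (t⁻¹ * p.1) ≤ ((a:ℝ) - 1) * (t⁻¹ * p.2)) ↔ ((c:ℝ) * p.1 ≤ ((a:ℝ)-1) * p.2) := by
    rw [show (c:ℝ) * (t⁻¹ * p.1) = t⁻¹ * ((c:ℝ) * p.1) by ring,
        show ((a:ℝ) - 1) * (t⁻¹ * p.2) = t⁻¹ * (((a:ℝ)-1) * p.2) by ring]
    exact mul_le_mul_iff_right₀ htinv
  have e3 : ((a:ℝ) * (t⁻¹ * p.2) - (c:ℝ) ≤ (c:ℝ) * (t⁻¹ * p.1)) ↔ ((a:ℝ) * p.2 - t * c ≤ (c:ℝ) * p.1) := by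
    rw [show (a:ℝ) * (t⁻¹ * p.2) - (c:ℝ) = t⁻¹ * ((a:ℝ) * p.2 - t * c) by field_simp,
        show (c:ℝ) * (t⁻¹ * p.1) = t⁻¹ * ((c:ℝ) * p.1) by ring]
    exact mul_le_mul_iff_right₀ htinv
  rw [e1, e2, e3]

lemma interior_smul_tri (a c : ℤ) (hc : 0 < c) (t : ℝ) (ht : 0 < t) :
    interior (t • Tri a c) =
      {p : ℝ × ℝ | 0 < p.2 ∧ (c:ℝ) * p.1 < ((a:ℝ) - 1) * p.2 ∧ (a:ℝ) * p.2 - t * c < c * p.1} := by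
  have hcR : (0:ℝ) < c := by exact_mod_cast hc
  apply subset_antisymm
  · intro p hp
    rw [mem_interior_iff_mem_nhds, Metric.mem_nhds_iff] at hp
    obtain ⟨ε, hε, hball⟩ := hp
    set δ := ε / 2 with hδ
    have hδ0 : 0 < δ := by positivity
    have hδε : δ < ε := by simp [hδ]; linarith
    have key : ∀ q : ℝ × ℝ, dist q p < ε → (0 ≤ q.2 ∧ (c:ℝ) * q.1 ≤ ((a:ℝ) - 1) * q.2 ∧ (a:ℝ) * q.2 - t * c ≤ c * q.1) := by
      intro q hq
      exact (mem_smul_tri_iff a c hc t ht q).1 (hball hq)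
    have habs : |δ| < ε := by rw [abs_of_nonneg hδ0.le]; exact hδε
    have habs' : |(-δ)| < ε := by rwa [abs_neg]
    have d1 : dist ((p.1, p.2 - δ) : ℝ × ℝ) p < ε := by
      rw [Prod.dist_eq]
      apply max_lt
      · simpa [Real.dist_eq] using hε
      · simpa [Real.dist_eq] using habs'
    have d2 : dist ((p.1 + δ, p.2) : ℝ × ℝ) p < ε := by
      rw [Prod.dist_eq]
      apply max_lt
      · simpa [Real.dist_eq] using habs
      · simpa [Real.dist_eq] using hε
    have d3 : dist ((p.1 - δ, p.2) : ℝ × ℝ) p < ε := by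
      rw [Prod.dist_eq]
      apply max_lt
      · simpa [Real.dist_eq] using habs'
      · simpa [Real.dist_eq] using hε
    have k1 := (key _ d1).1
    have k2 := (key _ d2).2.1
    have k3 := (key _ d3).2.2
    simp only at k1 k2 k3
    refine ⟨by linarith, by nlinarith, by nlinarith⟩
  · apply interior_maximal
    · intro p hp
      rw [mem_smul_tri_iff a c hc t ht]
      exact ⟨hp.1.le, hp.2.1.le, hp.2.2.le⟩
    · have : {p : ℝ × ℝ | 0 < p.2 ∧ (c:ℝ) * p.1 < ((a:ℝ) - 1) * p.2 ∧ (a:ℝ) * p.2 - t * c < c * p.1}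
          = {p : ℝ × ℝ | 0 < p.2} ∩ ({p : ℝ × ℝ | (c:ℝ) * p.1 < ((a:ℝ) - 1) * p.2} ∩ {p : ℝ × ℝ | (a:ℝ) * p.2 - t * c < c * p.1}) := by
        ext q; simp [Set.mem_inter_iff, and_assoc]
      rw [this]
      refine IsOpen.inter ?_ (IsOpen.inter ?_ ?_)
      · exact isOpen_lt continuous_const continuous_snd
      · exact isOpen_lt (continuous_const.mul continuous_fst) (continuous_const.mul continuous_snd)
      · exact isOpen_lt ((continuous_const.mul continuous_snd).sub continuous_const) (continuous_const.mul continuous_fst)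

lemma fiber_count (a d c : ℤ) (had : c ∣ a * d - 1) (hc : 0 < c) (k : ℤ)
    (hk1 : 1 ≤ k) (hkc : k < c) :
    (((Finset.Icc (1:ℤ) (k-1)).filter (fun m => c ∣ a*m - k)).card : ℤ)
      = (d*k)/c - (d*k - k)/c := by
  have hcd : ∀ m : ℤ, c ∣ a*m - k → c ∣ d*k - m := by
    intro m hm
    have h1 : c ∣ d*(k - a*m) := Dvd.dvd.mul_left (by simpa using (dvd_neg.2 hm)) d
    have h2 : c ∣ m*(a*d - 1) := Dvd.dvd.mul_left had m
    have : d*k - m = d*(k - a*m) + m*(a*d - 1) := by ring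
    rw [this]; exact dvd_add h1 h2
  have hdc : ∀ j : ℤ, c ∣ a*(d*k - c*j) - k := by
    intro j
    have : a*(d*k - c*j) - k = k*(a*d - 1) - c*(a*j) := by ring
    rw [this]
    exact dvd_sub (Dvd.dvd.mul_left had k) (Dvd.intro _ rfl)
  have hck : ¬ (c ∣ d*k) := by
    intro hdk
    have h1 : c ∣ a*(d*k) := Dvd.dvd.mul_left hdk a
    have h2 : c ∣ k*(a*d - 1) := Dvd.dvd.mul_left had k
    have : c ∣ k := by
      have e : k = a*(d*k) - k*(a*d-1) := by ring
      rw [e]; exact dvd_sub h1 h2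
    exact absurd (Int.le_of_dvd (by omega) this) (by omega)
  have hcard : ((Finset.Icc (1:ℤ) (k-1)).filter (fun m => c ∣ a*m - k)).card
      = (Finset.Ioc ((d*k - k)/c) ((d*k)/c)).card := by
    apply Finset.card_nbij' (i := fun m => (d*k - m)/c) (j := fun j => d*k - c*j)
    · intro m hm
      simp only [Finset.mem_coe, Finset.mem_filter, Finset.mem_Icc] at hm
      obtain ⟨⟨hm1, hm2⟩, hmd⟩ := hm
      obtain ⟨j, hj⟩ := hcd m hmd
      have hcm : c * j = j * c := mul_comm c j
      have hjval : (d*k - m)/c = j := by rw [hj]; exact Int.mul_ediv_cancel_left j hc.ne'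
      beta_reduce
      rw [Finset.mem_coe, Finset.mem_Ioc, hjval]
      constructor
      · rw [Int.ediv_lt_iff_lt_mul hc]; omega
      · rw [Int.le_ediv_iff_mul_le hc]; omega
    · intro j hj
      rw [Finset.mem_coe, Finset.mem_Ioc] at hj
      obtain ⟨hj1, hj2⟩ := hj
      have hcm : c * j = j * c := mul_comm c j
      rw [Int.ediv_lt_iff_lt_mul hc] at hj1
      rw [Int.le_ediv_iff_mul_le hc] at hj2
      simp only [Finset.mem_coe, Finset.mem_filter, Finset.mem_Icc]
      refine ⟨⟨?_, by omega⟩, hdc j⟩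
      -- 1 ≤ d*k - c*j : since d*k - c*j ≥ 0 and ≠ 0 (else c ∣ d*k)
      rcases eq_or_lt_of_le (by omega : (0:ℤ) ≤ d*k - c*j) with h0 | h0
      · exfalso; exact hck ⟨j, by omega⟩
      · omega
    · intro m hm
      simp only [Finset.mem_coe, Finset.mem_filter, Finset.mem_Icc] at hm
      obtain ⟨j, hj⟩ := hcd m hm.2
      have hjval : (d*k - m)/c = j := by rw [hj]; exact Int.mul_ediv_cancel_left j hc.ne'
      beta_reduce
      rw [hjval]; omega
    · intro j _
      beta_reduce
      rw [show d*k - (d*k - c*j) = c*j by ring]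
      exact Int.mul_ediv_cancel_left j hc.ne'
  rw [hcard, Int.card_Ioc]
  have : (d*k - k)/c ≤ (d*k)/c := Int.ediv_le_ediv hc (by omega)
  omega

open scoped Classical in
lemma count_eq (a d c : ℤ) (had : c ∣ a*d - 1) (hc : 0 < c) (Nz : ℤ) (hN1 : 1 ≤ Nz) (hNc : Nz < c) :
    ({p : ℤ × ℤ | 0 < p.2 ∧ a*p.2 - Nz < c*p.1 ∧ c*p.1 < (a-1)*p.2}.ncard : ℤ)
      = ∑ k ∈ Finset.Icc (1:ℤ) (Nz-1), ((d*k)/c - (d*k - k)/c) := by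
  set C : Finset (ℤ × ℤ) := (Finset.Icc (1:ℤ) (Nz-1) ×ˢ Finset.Icc (1:ℤ) (Nz-1)).filter
      (fun q => q.2 < q.1 ∧ c ∣ a*q.2 - q.1) with hC
  set f : ℤ × ℤ → ℤ × ℤ := fun q => ((a*q.2 - q.1)/c, q.2) with hf
  have hmemC : ∀ q : ℤ × ℤ, q ∈ C ↔ (1 ≤ q.1 ∧ q.1 ≤ Nz - 1 ∧ 1 ≤ q.2 ∧ q.2 < q.1 ∧ c ∣ a*q.2 - q.1) := by
    intro q
    simp only [hC, Finset.mem_filter, Finset.mem_product, Finset.mem_Icc]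
    constructor
    · rintro ⟨⟨⟨h1,h2⟩,⟨h3,h4⟩⟩,h5,h6⟩; exact ⟨h1,h2,h3,h5,h6⟩
    · rintro ⟨h1,h2,h3,h4,h5⟩; exact ⟨⟨⟨h1,h2⟩,⟨h3, by omega⟩⟩,h4,h5⟩
  have hset : {p : ℤ × ℤ | 0 < p.2 ∧ a*p.2 - Nz < c*p.1 ∧ c*p.1 < (a-1)*p.2} = ↑(C.image f) := by
    ext p
    simp only [Set.mem_setOf_eq, Finset.coe_image, Set.mem_image, Finset.mem_coe]
    have e : ((a:ℤ)-1)*p.2 = a*p.2 - p.2 := by ring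
    constructor
    · rintro ⟨h1, h2, h3⟩
      rw [e] at h3
      refine ⟨(a*p.2 - c*p.1, p.2), ?_, ?_⟩
      · rw [hmemC]
        refine ⟨?_, ?_, ?_, ?_, ⟨p.1, ?_⟩⟩
        · show (1:ℤ) ≤ a*p.2 - c*p.1; linarith
        · show a*p.2 - c*p.1 ≤ Nz - 1; linarith
        · show (1:ℤ) ≤ p.2; linarith
        · show p.2 < a*p.2 - c*p.1; linarith
        · show a*p.2 - (a*p.2 - c*p.1) = c * p.1; ring
      · have : (a*p.2 - (a*p.2 - c*p.1))/c = p.1 := by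
          rw [show a*p.2 - (a*p.2 - c*p.1) = c*p.1 by ring]
          exact Int.mul_ediv_cancel_left _ hc.ne'
        simp only [hf]
        exact Prod.ext this rfl
    · rintro ⟨q, hq, rfl⟩
      rw [hmemC] at hq
      obtain ⟨h1', h2', h3', h4', h5'⟩ := hq
      have hmul : c * ((a*q.2 - q.1)/c) = a*q.2 - q.1 := Int.mul_ediv_cancel' h5'
      refine ⟨by show (0:ℤ) < q.2; linarith, ?_, ?_⟩
      · show a * q.2 - Nz < c * ((a*q.2 - q.1)/c)
        rw [hmul]; linarith
      · show c * ((a*q.2 - q.1)/c) < (a-1) * q.2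
        rw [hmul, show ((a:ℤ)-1)*q.2 = a*q.2 - q.2 from by ring]; linarith
  rw [hset, Set.ncard_coe_finset]
  have hinj : Set.InjOn f ↑C := by
    intro q hq q' hq' hqq
    rw [Finset.mem_coe, hmemC] at hq hq'
    have h2 : (f q).2 = (f q').2 := congrArg Prod.snd hqq
    have h1 : (f q).1 = (f q').1 := congrArg Prod.fst hqq
    simp only [hf] at h1 h2
    have e1 : c * ((a*q.2 - q.1)/c) = a*q.2 - q.1 := Int.mul_ediv_cancel' hq.2.2.2.2
    have e2 : c * ((a*q'.2 - q'.1)/c) = a*q'.2 - q'.1 := Int.mul_ediv_cancel' hq'.2.2.2.2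
    have : a*q.2 - q.1 = a*q'.2 - q'.1 := by rw [← e1, ← e2, h1]
    have h2' : a * q.2 = a * q'.2 := by rw [h2]
    have : q.1 = q'.1 := by linarith
    exact Prod.ext this h2
  rw [Finset.card_image_of_injOn hinj]
  have hfib : C.card = ∑ k ∈ Finset.Icc (1:ℤ) (Nz-1), (C.filter (fun q => q.1 = k)).card := by
    apply Finset.card_eq_sum_card_fiberwise
    intro q hq
    rw [Finset.mem_coe, hmemC] at hq
    rw [Finset.mem_coe, Finset.mem_Icc]
    exact ⟨hq.1, hq.2.1⟩
  rw [hfib]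
  push_cast
  apply Finset.sum_congr rfl
  intro k hk
  rw [Finset.mem_Icc] at hk
  have hfibk : (C.filter (fun q => q.1 = k)).card
      = ((Finset.Icc (1:ℤ) (k-1)).filter (fun m => c ∣ a*m - k)).card := by
    apply Finset.card_nbij' (i := fun q => q.2) (j := fun m => (k, m))
    · intro q hq
      rw [Finset.mem_coe, Finset.mem_filter] at hq
      obtain ⟨hq1, rfl⟩ := hq
      rw [hmemC] at hq1
      simp only [Finset.mem_coe, Finset.mem_filter, Finset.mem_Icc]
      exact ⟨⟨hq1.2.2.1, by omega⟩, hq1.2.2.2.2⟩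
    · intro m hm
      simp only [Finset.mem_coe, Finset.mem_filter, Finset.mem_Icc] at hm
      beta_reduce
      rw [Finset.mem_coe, Finset.mem_filter, hmemC]
      exact ⟨⟨by omega, by omega, by omega, by omega, hm.2⟩, rfl⟩
    · intro q hq
      rw [Finset.mem_coe, Finset.mem_filter] at hq
      obtain ⟨_, rfl⟩ := hq
      rfl
    · intro m _
      rfl
  rw [hfibk]
  exact_mod_cast fiber_count a d c had hc k (by omega) (by omega)

lemma floor_mul_div (m d c : ℤ) (hc : 0 < c) : ⌊((m:ℚ) * (d:ℚ)) / (c:ℚ)⌋ = (m*d)/c := by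
  have h1 : (c:ℚ) = ((c.toNat : ℕ) : ℚ) := by
    rw [show ((c.toNat : ℕ) : ℚ) = ((c.toNat : ℤ) : ℚ) from by push_cast; ring,
      Int.toNat_of_nonneg hc.le]
  rw [show (m:ℚ)*(d:ℚ) = ((m*d : ℤ) : ℚ) from by push_cast; ring, h1,
    Rat.floor_intCast_div_natCast, Int.toNat_of_nonneg hc.le]

theorem statement9' (a b c d : ℤ) (hdet : a * d - b * c = 1) (hc : 0 < c)
    (x₁ : ℚ) (hx : ∃ n : ℤ, (c : ℚ) * x₁ = (n : ℚ)) (hx' : x₁.den ≠ 1)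
    (N : ℕ) (hN : (N : ℚ) = c * (x₁ - ⌊x₁⌋)) :
    (Set.ncard {p : ℤ × ℤ | ((p.1 : ℝ), (p.2 : ℝ)) ∈ interior (Int.fract (x₁ : ℝ) • Tri a c)} : ℤ)
      = ∑ m ∈ Finset.Icc 1 (N - 1),
          (⌊((m : ℚ) * (d : ℚ) / (c : ℚ))⌋ - ⌊((m : ℚ) * ((d : ℚ) - 1) / (c : ℚ))⌋) := by
  have hcR : (0:ℝ) < (c:ℝ) := by exact_mod_cast hc
  set t : ℝ := Int.fract (x₁ : ℝ) with htdef
  have hfl : (⌊(x₁:ℝ)⌋ : ℤ) = ⌊x₁⌋ := Rat.floor_cast x₁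
  have htq : t = ((x₁ - (⌊x₁⌋ : ℚ) : ℚ) : ℝ) := by
    rw [htdef, ← Int.self_sub_floor, hfl]; push_cast; ring
  have htc : t * c = (N:ℝ) := by
    rw [htq, show ((x₁ - (⌊x₁⌋:ℚ) : ℚ) : ℝ) * (c:ℝ) = (((c * (x₁ - ⌊x₁⌋)) : ℚ) : ℝ) from by
      push_cast; ring, ← hN]
    push_cast; ring
  have hx1ne : x₁ - (⌊x₁⌋ : ℚ) ≠ 0 := by
    intro h
    have hq : x₁ = ((⌊x₁⌋ : ℤ) : ℚ) := by linarith [sub_eq_zero.1 h]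
    exact hx' (by rw [hq]; exact Rat.den_intCast _)
  have ht : 0 < t := by
    rcases lt_or_eq_of_le (Int.fract_nonneg (x₁:ℝ)) with h | h
    · exact h
    · exfalso
      apply hx1ne
      have h2 : t = 0 := by rw [htdef]; exact h.symm
      rw [htq] at h2
      exact_mod_cast h2
  have hN0 : N ≠ 0 := by
    intro h
    rw [h] at htc
    push_cast at htc
    nlinarith
  have hNcZ : ((N:ℤ) : ℤ) < c := by
    have h1 : t < 1 := Int.fract_lt_one _
    have h2 : (N:ℝ) < (c:ℝ) := by rw [← htc]; nlinarith
    exact_mod_cast h2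
  have hN1 : 1 ≤ (N:ℤ) := by exact_mod_cast Nat.one_le_iff_ne_zero.2 hN0
  have had : c ∣ a*d - 1 := ⟨b, by linarith⟩
  have hsetZ : {p : ℤ × ℤ | ((p.1:ℝ), (p.2:ℝ)) ∈ interior (t • Tri a c)}
      = {p : ℤ × ℤ | 0 < p.2 ∧ a*p.2 - (N:ℤ) < c*p.1 ∧ c*p.1 < (a-1)*p.2} := by
    ext p
    rw [Set.mem_setOf_eq, Set.mem_setOf_eq, interior_smul_tri a c hc t ht, Set.mem_setOf_eq, htc]
    simp only [Prod.fst, Prod.snd]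
    constructor
    · rintro ⟨h1, h2, h3⟩
      refine ⟨by exact_mod_cast h1, by exact_mod_cast h3, by exact_mod_cast h2⟩
    · rintro ⟨h1, h2, h3⟩
      refine ⟨by exact_mod_cast h1, by exact_mod_cast h3, by exact_mod_cast h2⟩
  rw [hsetZ, count_eq a d c had hc (N:ℤ) hN1 hNcZ]
  apply Finset.sum_nbij' (i := fun k : ℤ => k.toNat) (j := fun m : ℕ => (m:ℤ))
  · intro k hk
    rw [Finset.mem_Icc] at hk ⊢
    omega
  · intro m hm
    rw [Finset.mem_Icc] at hm ⊢
    omega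
  · intro k hk; rw [Finset.mem_Icc] at hk; omega
  · intro m _; simp
  · intro k hk
    rw [Finset.mem_Icc] at hk
    have hkn : ((k.toNat : ℕ) : ℚ) = (k : ℚ) := by
      rw [show ((k.toNat : ℕ) : ℚ) = ((k.toNat : ℤ) : ℚ) from by push_cast; ring,
        Int.toNat_of_nonneg (by omega)]
    rw [hkn, floor_mul_div k d c hc,
      show (k:ℚ) * ((d:ℚ) - 1) = (k:ℚ) * (((d-1 : ℤ)):ℚ) from by push_cast; ring,
      floor_mul_div k (d-1) c hc,
      show d*k - k = k*(d-1) from by ring, mul_comm d k]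


/-- **Theorem (Statement 9).** Number of interior lattice points of `T_{γ,x}` as a sum
of differences of floors. -/
theorem statement9 (a b c d : ℤ) (hdet : a * d - b * c = 1) (hc : 0 < c)
    (x₁ : ℚ) (hx : ∃ n : ℤ, (c : ℚ) * x₁ = (n : ℚ)) (hx' : x₁.den ≠ 1)
    (N : ℕ) (hN : (N : ℚ) = c * (x₁ - ⌊x₁⌋)) :
    (latticeCount (interior (Int.fract (x₁ : ℝ) • Tri a c)) : ℤ)
      = ∑ m ∈ Finset.Icc 1 (N - 1),
          (⌊((m : ℚ) * (d : ℚ) / (c : ℚ))⌋ - ⌊((m : ℚ) * ((d : ℚ) - 1) / (c : ℚ))⌋) := by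
  have h := statement9' a b c d hdet hc x₁ hx hx' N hN
  unfold latticeCount
  exact h
end

section
/- Let γ=((a,b),(c,d)) ∈ SL₂(ℤ) with c>0 and ℓ_γ := gcd(c,a−1), and let x₁ ∈ ℓ_γ⁻¹ℤ ∖ ℤ. Then the open line segment in ℝ² joining the points (−{x₁}, 0) and ((a−1){x₁}, c{x₁}) (both endpoints excluded) contains no points of ℤ². (This is the edge of T_{γ,x} joining −{x₁}e₁ and (a−1){x₁}e₁ + c{x₁}e₂, endpoints excluded.) -/
open scoped Pointwise Classical
open MeasureTheory

/-- **Theorem (Statement 13).** The open segment joining `(−{x₁},0)` and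
`((a−1){x₁}, c{x₁})` contains no lattice points. -/
theorem statement13 (a b c d : ℤ) (hdet : a * d - b * c = 1) (hc : 0 < c)
    (x₁ : ℚ) (hx : ∃ n : ℤ, x₁ = (n : ℚ) / (Int.gcd c (a - 1) : ℚ)) (hx' : x₁.den ≠ 1) :
    ∀ m n : ℤ, ((m : ℝ), (n : ℝ)) ∉
      openSegment ℝ ((-Int.fract (x₁ : ℝ), (0 : ℝ)))
        (((a : ℝ) - 1) * Int.fract (x₁ : ℝ), (c : ℝ) * Int.fract (x₁ : ℝ)) := by
  intro m n hmem
  obtain ⟨n₀, hn₀⟩ := hx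
  have hℓc : ((Int.gcd c (a - 1) : ℤ)) ∣ c := Int.gcd_dvd_left c (a - 1)
  have hℓa : ((Int.gcd c (a - 1) : ℤ)) ∣ a - 1 := Int.gcd_dvd_right c (a - 1)
  set ℓ : ℤ := (Int.gcd c (a - 1) : ℤ) with hℓ
  have hℓpos : (0 : ℤ) < ℓ :=
    Int.natCast_pos.mpr (Int.gcd_pos_of_ne_zero_left (a - 1) hc.ne')
  -- the rational fractional part
  set r : ℚ := x₁ - ⌊x₁⌋ with hr
  have hrf : Int.fract (x₁ : ℝ) = (r : ℝ) := by
    rw [hr, ← Rat.cast_fract]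
    norm_cast
  have hr0 : 0 < r := by
    rcases lt_or_eq_of_le (Int.fract_nonneg x₁) with h | h
    · rw [Int.fract] at h; exact h
    · exfalso
      apply hx'
      have hz : x₁ = (⌊x₁⌋ : ℚ) := by
        have := h.symm
        rw [Int.fract] at this
        linarith
      rw [hz, Rat.den_intCast]
  have hr1 : r < 1 := by
    have := Int.fract_lt_one x₁
    rw [Int.fract] at this
    linarith
  -- ℓ * r is an integer p'
  have hgne : (ℓ : ℚ) ≠ 0 := by exact_mod_cast hℓpos.ne'
  have hℓx : (ℓ : ℚ) * x₁ = (n₀ : ℚ) := by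
    rw [hn₀, hℓ]
    push_cast
    rw [mul_comm]
    exact div_mul_cancel₀ _ (Nat.cast_ne_zero.mpr (Int.gcd_pos_of_ne_zero_left (a - 1) hc.ne').ne')
  set p' : ℤ := n₀ - ℓ * ⌊x₁⌋ with hp'
  have hp'r : (p' : ℚ) = (ℓ : ℚ) * r := by
    push_cast [hp', hr]
    rw [← hℓx]; ring
  obtain ⟨c₁, hc₁⟩ := hℓc
  set N : ℤ := c₁ * p' with hN
  have hNr : (N : ℚ) = (c : ℚ) * r := by
    push_cast [hN]
    rw [hp'r, hc₁]; push_cast; ring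
  have hcQ : (0 : ℚ) < (c : ℚ) := by exact_mod_cast hc
  have hN0 : 0 < N := by
    have : (0 : ℚ) < (N : ℚ) := by rw [hNr]; positivity
    exact_mod_cast this
  have hNc : N < c := by
    have : (N : ℚ) < (c : ℚ) := by
      rw [hNr]
      nlinarith [hr1, hcQ]
    exact_mod_cast this
  -- unpack membership
  obtain ⟨s, t, hs, ht, hst, heq⟩ := hmem
  rw [Prod.smul_mk, Prod.smul_mk, Prod.mk_add_mk, Prod.mk.injEq] at heq
  obtain ⟨h1, h2⟩ := heq
  simp only [smul_eq_mul] at h1 h2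
  rw [hrf] at h1 h2
  have hfr : (0 : ℝ) < (r : ℝ) := by exact_mod_cast hr0
  have hcR : (0 : ℝ) < (c : ℝ) := by exact_mod_cast hc
  -- key real equation
  have hkeyR : (c : ℝ) * m = a * n - c * (r : ℝ) := by
    linear_combination (-(c : ℝ)) * h1 + (a : ℝ) * h2 - ((c : ℝ) * (r : ℝ)) * hst
  have hcrN : ((c : ℝ)) * (r : ℝ) = (N : ℝ) := by exact_mod_cast hNr.symm
  have hkey : c * m = a * n - N := by
    have : ((c * m : ℤ) : ℝ) = ((a * n - N : ℤ) : ℝ) := by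
      push_cast
      rw [hkeyR, hcrN]
    exact_mod_cast this
  -- bounds on n
  have hn2 : (n : ℝ) = t * ((c : ℝ) * (r : ℝ)) := by linarith
  have ht1 : t < 1 := by linarith
  have hn0 : 0 < n := by
    have : (0 : ℝ) < (n : ℝ) := by rw [hn2]; positivity
    exact_mod_cast this
  have hnN : n < N := by
    have : (n : ℝ) < (N : ℝ) := by
      rw [hn2, ← hcrN]
      nlinarith [mul_pos (sub_pos.mpr ht1) (mul_pos hcR hfr)]
    exact_mod_cast this
  -- divisibility
  have hℓd : ℓ ∣ d - 1 := by
    have hdd : d - 1 = -d * (a - 1) + b * (ℓ * c₁) := by rw [← hc₁]; linarith [hdet]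
    rw [hdd]
    exact dvd_add (Dvd.dvd.mul_left hℓa _) ⟨b * c₁, by ring⟩
  obtain ⟨e, he⟩ := hℓd
  have hdvd : c ∣ n - N :=
    ⟨d * m - b * n + e * p', by
      linear_combination (-d) * hkey + (-n) * hdet + (N : ℤ) * he + (-(e * p')) * hc₁⟩
  have habs : |n - N| < c := by
    rw [abs_lt]
    omega
  have := Int.eq_zero_of_abs_lt_dvd hdvd habs
  omega
end
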